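/- Consider small categories A, B, C, D and functors F: A → B, I: A → C, J: B → D, G: C → D with J ∘ F = G ∘ I. Suppose that for every object b of B the induced functor between comma categories b↓F → Jb↓G, sending (a ∈ A, f: b → F a) to (I a, J f: J b → G I a), is initial (equivalently, its opposite functor is final). Then the Beck–Chevalley natural transformation F_! ∘ I^* ⟹ J^* ∘ G_! between functors Fun(C^op, Set) → Fun(B^op, Set) is a natural isomorphism. -/

import Mathlib

open CategoryTheory

universe u

namespace Paper

variable {A B C D : Type u} [SmallCategory A] [SmallCategory B] [SmallCategory C]
  [SmallCategory D]

/-- Given a commutative square `J ∘ F = G ∘ I` of functors and an object `b` of `B`, the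
induced functor between comma categories `b ↓ F ⥤ J b ↓ G`, sending
`(a, f : b ⟶ F a)` to `(I a, J f : J b ⟶ G (I a))`. -/
def inducedComma (F : A ⥤ B) (I : A ⥤ C) (J : B ⥤ D) (G : C ⥤ D)
    (h : F ⋙ J = I ⋙ G) (b : B) :
    StructuredArrow b F ⥤ StructuredArrow (J.obj b) G where
  obj p := StructuredArrow.mk (Y := I.obj p.right)
    (J.map p.hom ≫ eqToHom (by rw [← Functor.comp_obj, h, Functor.comp_obj]))
  map {p q} f := StructuredArrow.homMk (I.map f.right) (by
    have hw : p.hom ≫ F.map f.right = q.hom := StructuredArrow.w f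
    have hc := Functor.congr_hom h f.right
    simp only [Functor.comp_map] at hc
    dsimp
    rw [← hw, Functor.map_comp, Category.assoc, hc]
    simp)

/-- The equality of restriction functors between presheaf categories induced by a
commutative square `J ∘ F = G ∘ I`, namely `I^* ∘ G^* = F^* ∘ J^*`. -/
lemma restrictionSquare (F : A ⥤ B) (I : A ⥤ C) (J : B ⥤ D) (G : C ⥤ D)
    (h : F ⋙ J = I ⋙ G) :
    ((Functor.whiskeringLeft Cᵒᵖ Dᵒᵖ (Type u)).obj G.op) ⋙
        ((Functor.whiskeringLeft Aᵒᵖ Cᵒᵖ (Type u)).obj I.op) =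
      ((Functor.whiskeringLeft Bᵒᵖ Dᵒᵖ (Type u)).obj J.op) ⋙
        ((Functor.whiskeringLeft Aᵒᵖ Bᵒᵖ (Type u)).obj F.op) := by
  have h' : I.op ⋙ G.op = F.op ⋙ J.op := (congrArg Functor.op h).symm
  show (Functor.whiskeringLeft Aᵒᵖ Dᵒᵖ (Type u)).obj (I.op ⋙ G.op) =
    (Functor.whiskeringLeft Aᵒᵖ Dᵒᵖ (Type u)).obj (F.op ⋙ J.op)
  rw [h']

/-- **Beck–Chevalley.** Consider small categories `A, B, C, D` and functors
`F : A ⥤ B`, `I : A ⥤ C`, `J : B ⥤ D`, `G : C ⥤ D` with `J ∘ F = G ∘ I`. Suppose that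
for every object `b` of `B` the induced functor between comma categories
`b ↓ F ⥤ J b ↓ G` is initial. Then the Beck–Chevalley natural transformation
`F_! ∘ I^* ⟹ J^* ∘ G_!` between functors `Fun(Cᵒᵖ, Set) ⥤ Fun(Bᵒᵖ, Set)` — i.e. the mate
of the equality `I^* ∘ G^* = F^* ∘ J^*` with respect to the Kan extension adjunctions
`G_! ⊣ G^*` and `F_! ⊣ F^*` — is a natural isomorphism. -/
theorem statement_0 (F : A ⥤ B) (I : A ⥤ C) (J : B ⥤ D) (G : C ⥤ D)
    (h : F ⋙ J = I ⋙ G)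
    (hinit : ∀ b : B, (inducedComma F I J G h b).Initial) :
    IsIso ((mateEquiv (G.op.lanAdjunction (Type u)) (F.op.lanAdjunction (Type u))).symm
      (eqToHom (restrictionSquare F I J G h))) := by
  have hsq : I.op ⋙ G.op = F.op ⋙ J.op := (congrArg Functor.op h).symm
  set σ := (mateEquiv (G.op.lanAdjunction (Type u)) (F.op.lanAdjunction (Type u))).symm
      (eqToHom (restrictionSquare F I J G h)) with hσ
  haveI : ∀ H : Cᵒᵖ ⥤ Type u, IsIso (σ.app H) := by
    intro H
    -- the comparison unit
    let u : I.op ⋙ H ⟶ F.op ⋙ (J.op ⋙ G.op.lan.obj H) :=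
      Functor.whiskerLeft I.op (G.op.lanUnit.app H) ≫
        eqToHom (by exact congrArg (fun K => K ⋙ G.op.lan.obj H) hsq)
    -- the factorization of the mate through the unit
    have comm : F.op.lanUnit.app (I.op ⋙ H) ≫ Functor.whiskerLeft F.op (σ.app H) = u := by
      rw [hσ]
      have h1 := unit_mateEquiv_symm (G.op.lanAdjunction (Type u)) (F.op.lanAdjunction (Type u))
        (eqToHom (restrictionSquare F I J G h)) H
      simp only [Functor.lanAdjunction_unit, Functor.id_obj, Functor.whiskeringLeft_obj_obj,
        Functor.whiskeringLeft_obj_map] at h1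
      rw [← h1]
      simp only [u]
      congr 1
      apply eqToHom_app
    -- pointwise left Kan extension property of the target
    have hpt : (Functor.LeftExtension.mk (J.op ⋙ G.op.lan.obj H) u).IsPointwiseLeftKanExtension := by
      intro Y
      obtain ⟨b⟩ := Y
      haveI := hinit b
      let Ψ : CostructuredArrow F.op (Opposite.op b) ⥤
          CostructuredArrow G.op (Opposite.op (J.obj b)) :=
        (structuredArrowOpEquivalence F b).inverse ⋙ (inducedComma F I J G h b).op ⋙
          (structuredArrowOpEquivalence G (J.obj b)).functor
      haveI : Ψ.Final := by
        haveI : ((inducedComma F I J G h b).op ⋙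
            (structuredArrowOpEquivalence G (J.obj b)).functor).Final :=
          Functor.final_comp _ _
        exact Functor.final_comp _ _
      let c := (Functor.LeftExtension.mk (G.op.lan.obj H)
        (G.op.lanUnit.app H)).coconeAt (Opposite.op (J.obj b))
      have hc : Limits.IsColimit c :=
        (Functor.isPointwiseLeftKanExtensionOfIsLeftKanExtension _ (G.op.lanUnit.app H))
          (Opposite.op (J.obj b))
      have hw : Limits.IsColimit (c.whisker Ψ) :=
        (Functor.Final.isColimitWhiskerEquiv Ψ c).symm hc
      refine hw.ofIsoColimit (Limits.Cocones.ext (Iso.refl _) (fun p => ?_))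
      dsimp [c, Ψ, u, inducedComma, structuredArrowOpEquivalence,
        CostructuredArrow.toStructuredArrow', StructuredArrow.toCostructuredArrow]
      simp [eqToHom_map, eqToHom_app]
      rfl
    haveI hlk : (J.op ⋙ G.op.lan.obj H).IsLeftKanExtension u := hpt.isLeftKanExtension
    haveI : (((Functor.whiskeringLeft Aᵒᵖ Cᵒᵖ (Type u)).obj I.op ⋙ F.op.lan).obj H).IsLeftKanExtension
        (F.op.lanUnit.app (I.op ⋙ H)) :=
      inferInstanceAs ((F.op.lan.obj (I.op ⋙ H)).IsLeftKanExtension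
        (F.op.lanUnit.app (I.op ⋙ H)))
    exact (Functor.isLeftKanExtension_iff_isIso (σ.app H)
      (F.op.lanUnit.app (I.op ⋙ H)) u comm).mp hlk
  exact NatIso.isIso_of_isIso_app σ

end Paper
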